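/- Let n ≥ 2 and let Hⁿ = {x ∈ ℝⁿ : xₙ > 0}. For distinct x,y ∈ Hⁿ, the equality tan(v_{Hⁿ}(x,y)) = sinh(ρ_{Hⁿ}(x,y)/2) holds if and only if the line through x and y is perpendicular to the boundary ∂Hⁿ, i.e. if and only if x and y differ only in their last coordinate. -/

import Mathlib

open EuclideanGeometry Real Set
open scoped RealInnerProductSpace

/-- The visual angle metric on a domain `G ⊊ ℝⁿ`:
`v_G(x,y) = sup_{z ∈ ∂G} ∠(x,z,y)`. -/
noncomputable def visualAngle {n : ℕ} (G : Set (EuclideanSpace ℝ (Fin n)))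
    (x y : EuclideanSpace ℝ (Fin n)) : ℝ :=
  sSup ((fun z => ∠ x z y) '' frontier G)

/-- Inverse hyperbolic cosine. -/
noncomputable def arcosh (t : ℝ) : ℝ := Real.log (t + Real.sqrt (t ^ 2 - 1))

/-- The upper half space `Hⁿ = {x ∈ ℝⁿ : xₙ > 0}` with `n = m + 2 ≥ 2`. -/
def upperHalf (m : ℕ) : Set (EuclideanSpace ℝ (Fin (m + 2))) :=
  {x | 0 < x (Fin.last (m + 1))}

/-- The hyperbolic metric of the upper half space:
`ρ_{Hⁿ}(x,y) = arcosh(1 + |x−y|²/(2 xₙ yₙ))`. -/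
noncomputable def rhoHalf {m : ℕ} (x y : EuclideanSpace ℝ (Fin (m + 2))) : ℝ :=
  _root_.arcosh (1 + dist x y ^ 2 / (2 * x (Fin.last (m + 1)) * y (Fin.last (m + 1))))

/-! ### Auxiliary lemmas -/

lemma VAM.cosh_arcosh {t : ℝ} (ht : 1 ≤ t) : Real.cosh (_root_.arcosh t) = t := by
  have h1 : 0 ≤ t ^ 2 - 1 := by nlinarith
  have hs : Real.sqrt (t ^ 2 - 1) ^ 2 = t ^ 2 - 1 := Real.sq_sqrt h1
  have hw : 0 < t + Real.sqrt (t ^ 2 - 1) := by positivity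
  have hinv : (t + Real.sqrt (t ^ 2 - 1))⁻¹ = t - Real.sqrt (t ^ 2 - 1) :=
    inv_eq_of_mul_eq_one_right (by nlinarith)
  rw [_root_.arcosh, Real.cosh_eq, Real.exp_log hw, ← Real.log_inv,
    Real.exp_log (by rw [hinv]; nlinarith [Real.sqrt_nonneg (t ^ 2 - 1)]), hinv]
  ring

lemma VAM.arcosh_nonneg {t : ℝ} (ht : 1 ≤ t) : 0 ≤ _root_.arcosh t := by
  have h1 : 0 ≤ t ^ 2 - 1 := by nlinarith
  have : (1 : ℝ) ≤ t + Real.sqrt (t ^ 2 - 1) := by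
    have := Real.sqrt_nonneg (t ^ 2 - 1); linarith
  exact Real.log_nonneg this

lemma VAM.sinh_half_arcosh {t : ℝ} (ht : 1 ≤ t) :
    Real.sinh (_root_.arcosh t / 2) = Real.sqrt ((t - 1) / 2) := by
  have h0 : 0 ≤ _root_.arcosh t / 2 := by linarith [VAM.arcosh_nonneg ht]
  have hs : 0 ≤ Real.sinh (_root_.arcosh t / 2) := Real.sinh_nonneg_iff.mpr h0
  have hsq : Real.sinh (_root_.arcosh t / 2) ^ 2 = (t - 1) / 2 := by
    have h2 := Real.cosh_two_mul (_root_.arcosh t / 2)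
    have h3 : Real.cosh (_root_.arcosh t / 2) ^ 2 = Real.sinh (_root_.arcosh t / 2) ^ 2 + 1 := Real.cosh_sq _
    have h4 : (2 : ℝ) * (_root_.arcosh t / 2) = _root_.arcosh t := by ring
    rw [h4, VAM.cosh_arcosh ht, h3] at h2
    linarith
  rw [← hsq, Real.sqrt_sq hs]

lemma VAM.sinh_half_rho {a b d : ℝ} (ha : 0 < a) (hb : 0 < b) (hd : 0 ≤ d) :
    Real.sinh (_root_.arcosh (1 + d ^ 2 / (2 * a * b)) / 2) = d / (2 * Real.sqrt (a * b)) := by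
  have ht : (1 : ℝ) ≤ 1 + d ^ 2 / (2 * a * b) := le_add_of_nonneg_right (by positivity)
  rw [VAM.sinh_half_arcosh ht]
  have h1 : (1 + d ^ 2 / (2 * a * b) - 1) / 2 = (d / (2 * Real.sqrt (a * b))) ^ 2 := by
    rw [div_pow, mul_pow, Real.sq_sqrt (by positivity : (0:ℝ) ≤ a * b),
      show 1 + d ^ 2 / (2 * a * b) - 1 = d ^ 2 / (2 * a * b) by ring, div_div]
    congr 1
    ring
  rw [h1, Real.sqrt_sq (by positivity)]

lemma VAM.tan_theta {a b d : ℝ} (ha : 0 < a) (hb : 0 < b) (hd : 0 ≤ d) :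
    Real.tan (Real.arccos (2 * Real.sqrt (a * b) / Real.sqrt (4 * (a * b) + d ^ 2)))
      = d / (2 * Real.sqrt (a * b)) := by
  have hab : (0:ℝ) < a * b := mul_pos ha hb
  have hA : (0:ℝ) < 4 * (a * b) + d ^ 2 := by positivity
  have hsA : (0:ℝ) < Real.sqrt (4 * (a * b) + d ^ 2) := Real.sqrt_pos.mpr hA
  have hsab : (0:ℝ) < Real.sqrt (a * b) := Real.sqrt_pos.mpr hab
  rw [Real.tan_arccos]
  have h1 : 1 - (2 * Real.sqrt (a * b) / Real.sqrt (4 * (a * b) + d ^ 2)) ^ 2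
      = d ^ 2 / (4 * (a * b) + d ^ 2) := by
    rw [div_pow, mul_pow, Real.sq_sqrt hab.le, Real.sq_sqrt hA.le]
    field_simp
    ring
  rw [h1, Real.sqrt_div (sq_nonneg d) _, Real.sqrt_sq hd]
  rw [div_div_div_comm, div_self (ne_of_gt hsA), div_one]

lemma VAM.inner_sub_eq {k : ℕ} (x y z : EuclideanSpace ℝ (Fin k)) :
    ⟪x - z, y - z⟫ = ∑ i, (x i - z i) * (y i - z i) := by
  simp [PiLp.inner_apply, RCLike.inner_apply, conj_trivial]
  exact Finset.sum_congr rfl fun i _ => mul_comm _ _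

lemma VAM.norm_sub_eq {k : ℕ} (x z : EuclideanSpace ℝ (Fin k)) :
    ‖x - z‖ = Real.sqrt (∑ i, (x i - z i) ^ 2) := by
  rw [EuclideanSpace.norm_eq]
  simp [Real.norm_eq_abs, sq_abs]

lemma VAM.angle_arccos {k : ℕ} (x y z : EuclideanSpace ℝ (Fin k)) :
    ∠ x z y = Real.arccos ((∑ i, (x i - z i) * (y i - z i)) /
      (Real.sqrt (∑ i, (x i - z i) ^ 2) * Real.sqrt (∑ i, (y i - z i) ^ 2))) := by
  rw [EuclideanGeometry.angle, InnerProductGeometry.angle, vsub_eq_sub, vsub_eq_sub,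
    VAM.inner_sub_eq, VAM.norm_sub_eq, VAM.norm_sub_eq]

lemma VAM.frontier_upperHalf (m : ℕ) :
    frontier (upperHalf m) = {z : EuclideanSpace ℝ (Fin (m+2)) | z (Fin.last (m+1)) = 0} := by
  have h1 : upperHalf m = (EuclideanSpace.proj (𝕜 := ℝ) (Fin.last (m+1))) ⁻¹' (Set.Ioi 0) := rfl
  have hsurj : Function.Surjective (EuclideanSpace.proj (𝕜 := ℝ) (Fin.last (m+1))) := fun r =>
    ⟨EuclideanSpace.single (Fin.last (m+1)) r, by simp⟩
  have hopen : IsOpenMap (EuclideanSpace.proj (𝕜 := ℝ) (Fin.last (m+1))) :=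
    (EuclideanSpace.proj (𝕜 := ℝ) (Fin.last (m+1))).isOpenMap hsurj
  rw [h1, ← hopen.preimage_frontier_eq_frontier_preimage (EuclideanSpace.proj _).continuous,
    frontier_Ioi]
  rfl

lemma VAM.coreA {a b s : ℝ} (ha : 0 < a) (hb : 0 < b) (hs : 0 ≤ s) :
    2 * Real.sqrt (a*b) * Real.sqrt ((s + a^2) * (s + b^2)) ≤ (s + a*b) * (a + b) := by
  have hab : (0:ℝ) ≤ a*b := by positivity
  have h2 : (2 * Real.sqrt (a*b) * Real.sqrt ((s + a^2) * (s + b^2)))^2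
      = 4 * (a*b) * ((s + a^2) * (s + b^2)) := by
    rw [mul_pow, mul_pow, Real.sq_sqrt hab, Real.sq_sqrt (by positivity)]
    ring
  refine le_of_pow_le_pow_left₀ two_ne_zero (by positivity) ?_
  rw [h2]
  nlinarith [sq_nonneg ((a-b)*(s-a*b)), sq_nonneg (s - a*b), sq_nonneg (a-b)]

lemma VAM.coreB {a b c : ℝ} (ha : 0 < a) (hb : 0 < b) (hc : 0 < c) :
    ∃ t : ℝ, 0 < a*b + t^2 - t*c ∧
      (a*b + t^2 - t*c)^2 * (4*(a*b) + (c^2 + (a-b)^2)) < 4*(a*b) * ((t^2 + a^2) * ((c-t)^2 + b^2)) := by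
  rcases lt_trichotomy a b with hab | hab | hab
  · set r := Real.sqrt (c^2 + 4*(a*b)) with hrdef
    have hr2 : r^2 = c^2 + 4*(a*b) := Real.sq_sqrt (by positivity)
    have hrpos : 0 < r := Real.sqrt_pos.mpr (by positivity)
    have hrc : c < r := by nlinarith [Real.sqrt_nonneg (c^2 + 4*(a*b))]
    refine ⟨(c + r)/2, by nlinarith, ?_⟩
    have hpq : ((c+r)/2) * ((r-c)/2) = a*b := by linear_combination hr2/4
    have e1 : a*b + ((c+r)/2)^2 - ((c+r)/2)*c = 2*(a*b) := by linear_combination hr2/4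
    have e2 : (c-(c+r)/2)^2 = ((r-c)/2)^2 := by ring
    rw [e1, e2]
    have h6 : 0 < 4*(a*b)*((b-a)*c*(b*((c+r)/2) + a*((r-c)/2))) := by
      apply mul_pos (by positivity)
      apply mul_pos (mul_pos (sub_pos.mpr hab) hc)
      nlinarith
    have key : 4*(a*b)*((((c+r)/2)^2+a^2)*(((r-c)/2)^2+b^2))
        - (2*(a*b))^2 * (4*(a*b) + (c^2+(a-b)^2))
        = 4*(a*b)*((b-a)*c*(b*((c+r)/2)+a*((r-c)/2))) := by
      linear_combination (4*a*b*(((c+r)/2)*((r-c)/2) + a*b + a^2+b^2)) * hpq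
    linarith [key, h6]
  · subst hab
    refine ⟨c, by nlinarith, ?_⟩
    nlinarith [mul_pos (mul_pos (mul_pos ha ha) (mul_pos ha ha)) (mul_pos hc hc)]
  · set r := Real.sqrt (c^2 + 4*(a*b)) with hrdef
    have hr2 : r^2 = c^2 + 4*(a*b) := Real.sq_sqrt (by positivity)
    have hrpos : 0 < r := Real.sqrt_pos.mpr (by positivity)
    have hrc : c < r := by nlinarith [Real.sqrt_nonneg (c^2 + 4*(a*b))]
    refine ⟨(c - r)/2, by nlinarith, ?_⟩
    have hpq : ((r-c)/2) * ((c+r)/2) = a*b := by linear_combination hr2/4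
    have e1 : a*b + ((c-r)/2)^2 - ((c-r)/2)*c = 2*(a*b) := by linear_combination hr2/4
    have e2 : (c-(c-r)/2)^2 = ((c+r)/2)^2 := by ring
    rw [e1, e2]
    have h6 : 0 < 4*(a*b)*((a-b)*c*(a*((c+r)/2) + b*((r-c)/2))) := by
      apply mul_pos (by positivity)
      apply mul_pos (mul_pos (sub_pos.mpr hab) hc)
      nlinarith
    have key : 4*(a*b)*((((c-r)/2)^2+a^2)*(((c+r)/2)^2+b^2))
        - (2*(a*b))^2 * (4*(a*b) + (c^2+(a-b)^2))
        = 4*(a*b)*((a-b)*c*(a*((c+r)/2)+b*((r-c)/2))) := by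
      linear_combination (4*a*b*(((r-c)/2)*((c+r)/2) + a*b + a^2+b^2)) * hpq
    linarith [key, h6]

set_option maxHeartbeats 2000000 in
theorem stmt8 (m : ℕ) :
    ∀ x ∈ upperHalf m, ∀ y ∈ upperHalf m, x ≠ y →
      (Real.tan (visualAngle (upperHalf m) x y) = Real.sinh (rhoHalf x y / 2) ↔
        ∀ i : Fin (m + 2), i ≠ Fin.last (m + 1) → x i = y i) := by
  intro x hx y hy hxy
  set L := Fin.last (m + 1) with hL
  have ha : 0 < x L := hx
  have hb : 0 < y L := hy
  set a := x L with haa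
  set b := y L with hbb
  set d := dist x y with hd
  have hd0 : 0 < d := dist_pos.mpr hxy
  have hab : 0 < a * b := mul_pos ha hb
  have hsab : 0 < Real.sqrt (a * b) := Real.sqrt_pos.mpr hab
  have hT : Real.sinh (rhoHalf x y / 2) = d / (2 * Real.sqrt (a * b)) := by
    rw [rhoHalf]
    exact VAM.sinh_half_rho ha hb hd0.le
  set C2 := ∑ i : Fin (m + 1), (x i.castSucc - y i.castSucc) ^ 2 with hC2
  have hC2nonneg : 0 ≤ C2 := Finset.sum_nonneg fun i _ => sq_nonneg _
  have hdsq : d ^ 2 = C2 + (a - b) ^ 2 := by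
    rw [hd, dist_eq_norm, VAM.norm_sub_eq,
      Real.sq_sqrt (Finset.sum_nonneg fun i _ => sq_nonneg _), hC2]
    exact Fin.sum_univ_castSucc fun i : Fin (m + 2) => (x i - y i) ^ 2
  set A := Real.sqrt (4 * (a * b) + d ^ 2) with hA
  have hApos : 0 < A := Real.sqrt_pos.mpr (by positivity)
  set C := 2 * Real.sqrt (a * b) / A with hC
  have hCpos : 0 < C := by positivity
  have hCle : C ≤ 1 := by
    rw [hC, div_le_one hApos, hA]
    have h2 : (2 * Real.sqrt (a * b)) ^ 2 ≤ 4 * (a * b) + d ^ 2 := by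
      rw [mul_pow, Real.sq_sqrt hab.le]; nlinarith [sq_nonneg d]
    calc 2 * Real.sqrt (a * b) = Real.sqrt ((2 * Real.sqrt (a * b)) ^ 2) :=
          (Real.sqrt_sq (by positivity)).symm
      _ ≤ Real.sqrt (4 * (a * b) + d ^ 2) := Real.sqrt_le_sqrt h2
  have htan0 : Real.tan (Real.arccos C) = d / (2 * Real.sqrt (a * b)) := by
    rw [hC, hA]; exact VAM.tan_theta ha hb hd0.le
  have hangle : ∀ z : EuclideanSpace ℝ (Fin (m + 2)), z L = 0 →
      ∠ x z y = Real.arccos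
        (((∑ i : Fin (m + 1), (x i.castSucc - z i.castSucc) * (y i.castSucc - z i.castSucc)) + a * b) /
          (Real.sqrt ((∑ i : Fin (m + 1), (x i.castSucc - z i.castSucc) ^ 2) + a ^ 2) *
           Real.sqrt ((∑ i : Fin (m + 1), (y i.castSucc - z i.castSucc) ^ 2) + b ^ 2))) := by
    intro z hz
    rw [VAM.angle_arccos x y z]
    have e1 : ∑ i : Fin (m + 2), (x i - z i) * (y i - z i)
        = (∑ i : Fin (m + 1), (x i.castSucc - z i.castSucc) * (y i.castSucc - z i.castSucc)) + a * b := by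
      simp only [Fin.sum_univ_castSucc]
      rw [hz]; ring
    have e2 : ∑ i : Fin (m + 2), (x i - z i) ^ 2
        = (∑ i : Fin (m + 1), (x i.castSucc - z i.castSucc) ^ 2) + a ^ 2 := by
      simp only [Fin.sum_univ_castSucc]
      rw [hz]; ring
    have e3 : ∑ i : Fin (m + 2), (y i - z i) ^ 2
        = (∑ i : Fin (m + 1), (y i.castSucc - z i.castSucc) ^ 2) + b ^ 2 := by
      simp only [Fin.sum_univ_castSucc]
      rw [hz]; ring
    rw [e1, e2, e3]
  have hbdd : BddAbove ((fun z => ∠ x z y) '' frontier (upperHalf m)) :=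
    ⟨π, by rintro w ⟨z, _, rfl⟩; exact EuclideanGeometry.angle_le_pi _ _ _⟩
  constructor
  · -- equality implies perpendicularity
    intro heq
    by_contra hcon
    push_neg at hcon
    obtain ⟨i, hiL, hine⟩ := hcon
    obtain ⟨j, rfl⟩ := Fin.exists_castSucc_eq.mpr hiL
    have hC2pos : 0 < C2 := by
      refine Finset.sum_pos' (fun i _ => sq_nonneg _) ⟨j, Finset.mem_univ j, ?_⟩
      have hne : x j.castSucc - y j.castSucc ≠ 0 := sub_ne_zero.mpr hine
      positivity
    set c := Real.sqrt C2 with hc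
    have hcpos : 0 < c := Real.sqrt_pos.mpr hC2pos
    have hc2 : c ^ 2 = C2 := Real.sq_sqrt hC2pos.le
    obtain ⟨t, hdot, hineq⟩ := VAM.coreB ha hb hcpos
    set z1 : EuclideanSpace ℝ (Fin (m + 2)) := (WithLp.equiv 2 (Fin (m + 2) → ℝ)).symm
      (fun i => if i = L then 0 else x i + (t / c) * (y i - x i)) with hz1
    have hz1L : z1 L = 0 := by simp [hz1, WithLp.equiv_symm_apply]
    have hz1cs : ∀ i : Fin (m + 1),
        z1 i.castSucc = x i.castSucc + (t / c) * (y i.castSucc - x i.castSucc) := by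
      intro i
      simp [hz1, hL, WithLp.equiv_symm_apply, (Fin.castSucc_lt_last i).ne]
    have hS1 : (∑ i : Fin (m + 1), (x i.castSucc - z1 i.castSucc) * (y i.castSucc - z1 i.castSucc))
        = t ^ 2 - t * c := by
      have e : ∀ i : Fin (m + 1), (x i.castSucc - z1 i.castSucc) * (y i.castSucc - z1 i.castSucc)
          = ((t / c) ^ 2 - (t / c)) * (x i.castSucc - y i.castSucc) ^ 2 := by
        intro i; rw [hz1cs i]; ring
      rw [Finset.sum_congr rfl fun i _ => e i, ← Finset.mul_sum, ← hC2, ← hc2]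
      field_simp
    have hS2 : (∑ i : Fin (m + 1), (x i.castSucc - z1 i.castSucc) ^ 2) = t ^ 2 := by
      have e : ∀ i : Fin (m + 1), (x i.castSucc - z1 i.castSucc) ^ 2
          = (t / c) ^ 2 * (x i.castSucc - y i.castSucc) ^ 2 := by
        intro i; rw [hz1cs i]; ring
      rw [Finset.sum_congr rfl fun i _ => e i, ← Finset.mul_sum, ← hC2, ← hc2]
      field_simp
    have hS3 : (∑ i : Fin (m + 1), (y i.castSucc - z1 i.castSucc) ^ 2) = (c - t) ^ 2 := by
      have e : ∀ i : Fin (m + 1), (y i.castSucc - z1 i.castSucc) ^ 2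
          = (1 - t / c) ^ 2 * (x i.castSucc - y i.castSucc) ^ 2 := by
        intro i; rw [hz1cs i]; ring
      rw [Finset.sum_congr rfl fun i _ => e i, ← Finset.mul_sum, ← hC2, ← hc2]
      field_simp
    have hangle1 : ∠ x z1 y = Real.arccos
        ((t ^ 2 - t * c + a * b) /
          (Real.sqrt (t ^ 2 + a ^ 2) * Real.sqrt ((c - t) ^ 2 + b ^ 2))) := by
      rw [hangle z1 hz1L, hS1, hS2, hS3]
    set q := (t ^ 2 - t * c + a * b) /
      (Real.sqrt (t ^ 2 + a ^ 2) * Real.sqrt ((c - t) ^ 2 + b ^ 2)) with hqdef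
    have hN1 : 0 < Real.sqrt (t ^ 2 + a ^ 2) := Real.sqrt_pos.mpr (by positivity)
    have hN2 : 0 < Real.sqrt ((c - t) ^ 2 + b ^ 2) := Real.sqrt_pos.mpr (by positivity)
    have hdot' : 0 < t ^ 2 - t * c + a * b := by linarith [hdot]
    have hqpos : 0 < q := div_pos hdot' (mul_pos hN1 hN2)
    have hqltC : q < C := by
      rw [hqdef, hC, div_lt_div_iff₀ (mul_pos hN1 hN2) hApos]
      have hL2 : ((t ^ 2 - t * c + a * b) * A) ^ 2
          = (a * b + t ^ 2 - t * c) ^ 2 * (4 * (a * b) + (c ^ 2 + (a - b) ^ 2)) := by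
        rw [mul_pow, hA, Real.sq_sqrt (by positivity), hdsq, ← hc2]; ring
      have hR2 : (2 * Real.sqrt (a * b) *
            (Real.sqrt (t ^ 2 + a ^ 2) * Real.sqrt ((c - t) ^ 2 + b ^ 2))) ^ 2
          = 4 * (a * b) * ((t ^ 2 + a ^ 2) * ((c - t) ^ 2 + b ^ 2)) := by
        rw [mul_pow, mul_pow, mul_pow, Real.sq_sqrt hab.le, Real.sq_sqrt (by positivity),
          Real.sq_sqrt (by positivity)]
        ring
      have h2 : ((t ^ 2 - t * c + a * b) * A) ^ 2 < (2 * Real.sqrt (a * b) *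
          (Real.sqrt (t ^ 2 + a ^ 2) * Real.sqrt ((c - t) ^ 2 + b ^ 2))) ^ 2 := by
        rw [hL2, hR2]; exact hineq
      exact lt_of_pow_lt_pow_left₀ 2 (by positivity) h2
    have hq1 : q ≤ 1 := le_trans hqltC.le hCle
    have hth1 : ∠ x z1 y < π / 2 := by
      rw [hangle1]; exact Real.arccos_lt_pi_div_two.mpr hqpos
    have hth2 : Real.arccos C < ∠ x z1 y := by
      rw [hangle1]
      exact Real.strictAntiOn_arccos ⟨by linarith, hq1⟩ ⟨by linarith, hCle⟩ hqltC
    have hmem : ∠ x z1 y ∈ (fun z => ∠ x z y) '' frontier (upperHalf m) :=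
      ⟨z1, by rw [VAM.frontier_upperHalf]; exact hz1L, rfl⟩
    have hvge : ∠ x z1 y ≤ visualAngle (upperHalf m) x y := le_csSup hbdd hmem
    have hvle : visualAngle (upperHalf m) x y ≤ π :=
      csSup_le ⟨_, hmem⟩ (by rintro w ⟨z, _, rfl⟩; exact EuclideanGeometry.angle_le_pi _ _ _)
    have hang_nonneg : 0 ≤ ∠ x z1 y := EuclideanGeometry.angle_nonneg _ _ _
    have hθ0nonneg : 0 ≤ Real.arccos C := Real.arccos_nonneg _
    rw [hT] at heq
    rcases lt_or_ge (visualAngle (upperHalf m) x y) (π / 2) with hcase | hcase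
    · have hmono : Real.tan (Real.arccos C) < Real.tan (visualAngle (upperHalf m) x y) := by
        have hpi := Real.pi_pos
        refine Real.strictMonoOn_tan ⟨by linarith, ?_⟩ ⟨by linarith, hcase⟩ (by linarith)
        exact Real.arccos_lt_pi_div_two.mpr hCpos
      rw [htan0, heq] at hmono
      linarith
    · have hpi := Real.pi_pos
      have hsin : 0 ≤ Real.sin (visualAngle (upperHalf m) x y) :=
        Real.sin_nonneg_of_nonneg_of_le_pi (by linarith) hvle
      have hcos : Real.cos (visualAngle (upperHalf m) x y) ≤ 0 :=
        Real.cos_nonpos_of_pi_div_two_le_of_le hcase (by linarith)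
      have htnp : Real.tan (visualAngle (upperHalf m) x y) ≤ 0 := by
        rw [Real.tan_eq_sin_div_cos]
        exact div_nonpos_of_nonneg_of_nonpos hsin hcos
      have hTpos : 0 < d / (2 * Real.sqrt (a * b)) := by positivity
      rw [heq] at htnp
      linarith
  · -- perpendicularity implies equality
    intro h
    have hyx : ∀ i : Fin (m + 1), y i.castSucc = x i.castSucc := fun i =>
      (h _ (Fin.castSucc_lt_last i).ne).symm
    have hC20 : C2 = 0 := by
      rw [hC2]
      apply Finset.sum_eq_zero
      intro i _
      rw [hyx i]; ring
    have hABsum : A = a + b := by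
      rw [hA, hdsq, hC20, zero_add,
        show 4 * (a * b) + (a - b) ^ 2 = (a + b) ^ 2 by ring,
        Real.sqrt_sq (by positivity)]
    set z0 : EuclideanSpace ℝ (Fin (m + 2)) := (WithLp.equiv 2 (Fin (m + 2) → ℝ)).symm
      (fun i => if i = L then 0 else if i = (0 : Fin (m + 2)) then x i + Real.sqrt (a * b) else x i)
      with hz0
    have hz0L : z0 L = 0 := by simp [hz0, WithLp.equiv_symm_apply]
    have hz0cs : ∀ i : Fin (m + 1), z0 i.castSucc =
        if i = 0 then x i.castSucc + Real.sqrt (a * b) else x i.castSucc := by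
      intro i
      simp [hz0, hL, WithLp.equiv_symm_apply, (Fin.castSucc_lt_last i).ne,
        Fin.castSucc_eq_zero_iff]
    have hterm : ∀ i : Fin (m + 1), (x i.castSucc - z0 i.castSucc) * (x i.castSucc - z0 i.castSucc)
        = if i = 0 then a * b else 0 := by
      intro i
      rw [hz0cs i]
      by_cases hi : i = 0
      · simp only [hi, if_true]
        linear_combination Real.mul_self_sqrt hab.le
      · simp only [hi, if_false]; ring
    have hsum0 : (∑ i : Fin (m + 1), (x i.castSucc - z0 i.castSucc) * (x i.castSucc - z0 i.castSucc))
        = a * b := by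
      rw [Finset.sum_congr rfl fun i _ => hterm i,
        Finset.sum_ite_eq' Finset.univ (0 : Fin (m + 1)) (fun _ => a * b)]
      simp
    have hS1 : (∑ i : Fin (m + 1), (x i.castSucc - z0 i.castSucc) * (y i.castSucc - z0 i.castSucc))
        = a * b := by
      rw [Finset.sum_congr rfl fun i _ => by rw [hyx i]]
      exact hsum0
    have hS2 : (∑ i : Fin (m + 1), (x i.castSucc - z0 i.castSucc) ^ 2) = a * b := by
      rw [Finset.sum_congr rfl fun i _ => sq (x i.castSucc - z0 i.castSucc)]
      exact hsum0
    have hS3 : (∑ i : Fin (m + 1), (y i.castSucc - z0 i.castSucc) ^ 2) = a * b := by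
      rw [Finset.sum_congr rfl fun i _ => by rw [hyx i]]
      exact hS2
    have hangle0 : ∠ x z0 y = Real.arccos C := by
      rw [hangle z0 hz0L, hS1, hS2, hS3]
      congr 1
      have e : Real.sqrt (a * b + a ^ 2) * Real.sqrt (a * b + b ^ 2)
          = Real.sqrt (a * b) * (a + b) := by
        rw [← Real.sqrt_mul (by positivity),
          show (a * b + a ^ 2) * (a * b + b ^ 2) = (a * b) * (a + b) ^ 2 by ring,
          Real.sqrt_mul (by positivity), Real.sqrt_sq (by positivity)]
      rw [e, hC, hABsum, div_eq_div_iff (by positivity) (by positivity)]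
      have hms := Real.mul_self_sqrt hab.le
      linear_combination (-2 * (a + b)) * hms
    have hub : ∀ w ∈ (fun z => ∠ x z y) '' frontier (upperHalf m), w ≤ Real.arccos C := by
      rintro w ⟨z, hzf, rfl⟩
      have hz : z L = 0 := by rw [VAM.frontier_upperHalf] at hzf; exact hzf
      show ∠ x z y ≤ Real.arccos C
      rw [hangle z hz]
      set s := ∑ i : Fin (m + 1), (x i.castSucc - z i.castSucc) ^ 2 with hs
      have hsnn : 0 ≤ s := Finset.sum_nonneg fun i _ => sq_nonneg _
      have hprod : (∑ i : Fin (m + 1), (x i.castSucc - z i.castSucc) * (y i.castSucc - z i.castSucc))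
          = s := by
        rw [hs]
        refine Finset.sum_congr rfl fun i _ => ?_
        rw [hyx i]; ring
      have hys : (∑ i : Fin (m + 1), (y i.castSucc - z i.castSucc) ^ 2) = s := by
        rw [hs]
        refine Finset.sum_congr rfl fun i _ => ?_
        rw [hyx i]
      rw [hprod, hys]
      have hq : C ≤ (s + a * b) / (Real.sqrt (s + a ^ 2) * Real.sqrt (s + b ^ 2)) := by
        have hcoreA := VAM.coreA ha hb hsnn
        rw [Real.sqrt_mul (by positivity : (0:ℝ) ≤ s + a ^ 2)] at hcoreA
        rw [hC, hABsum, div_le_div_iff₀ (by positivity) (by positivity)]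
        linarith [hcoreA]
      rw [Real.arccos_eq_pi_div_two_sub_arcsin, Real.arccos_eq_pi_div_two_sub_arcsin]
      have := Real.monotone_arcsin hq
      linarith
    have hVA : visualAngle (upperHalf m) x y = Real.arccos C :=
      IsGreatest.csSup_eq ⟨⟨z0, by rw [VAM.frontier_upperHalf]; exact hz0L, hangle0⟩, hub⟩
    rw [hVA, htan0, hT]
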